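/- A graph G is a König–Egerváry graph if and only if every maximum independent set of G is a critical independent set. -/

import Mathlib

open Finset

variable {V : Type*} [Fintype V] [DecidableEq V] (G : SimpleGraph V) [DecidableRel G.Adj]

/-- `N(S)`: the set of vertices adjacent to some vertex of `S`. -/
def nbhd (S : Finset V) : Finset V := S.biUnion (fun v => G.neighborFinset v)

/-- `S` is an independent set of `G`. -/
def Indep (S : Finset V) : Prop := ∀ u ∈ S, ∀ v ∈ S, ¬ G.Adj u v

/-- The difference `d_G(S) = |S| - |N(S)|`. -/
def diffI (S : Finset V) : ℤ := (S.card : ℤ) - ((nbhd G S).card : ℤ)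

/-- `S` is a maximum independent set of `G`. -/
def IsMaxIndep (S : Finset V) : Prop :=
  Indep G S ∧ ∀ T : Finset V, Indep G T → T.card ≤ S.card

/-- `I` is a critical independent set of `G`. -/
def IsCritIndep (I : Finset V) : Prop :=
  Indep G I ∧ ∀ J : Finset V, Indep G J → diffI G J ≤ diffI G I

/-- `I` is a maximum critical independent set of `G`. -/
def IsMaxCritIndep (I : Finset V) : Prop :=
  IsCritIndep G I ∧ ∀ J : Finset V, IsCritIndep G J → J.card ≤ I.card

/-- `core(G)`: intersection of all maximum independent sets. -/
def core : Set V := {v | ∀ S : Finset V, IsMaxIndep G S → v ∈ S}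

/-- `corona(G)`: union of all maximum independent sets. -/
def corona : Set V := {v | ∃ S : Finset V, IsMaxIndep G S ∧ v ∈ S}

/-- `nucleus(G)`: intersection of all maximum critical independent sets. -/
def nucleus : Set V := {v | ∀ S : Finset V, IsMaxCritIndep G S → v ∈ S}

/-- `diadem(G)`: union of all maximum critical independent sets. -/
def diadem : Set V := {v | ∃ S : Finset V, IsMaxCritIndep G S ∧ v ∈ S}

/-- `ker(G)`: intersection of all critical independent sets. -/
def kerS : Set V := {v | ∀ S : Finset V, IsCritIndep G S → v ∈ S}

/-- A matching of `G`, given as an involution of the vertex set: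
unmatched vertices are fixed points, matched vertices are sent to their partner. -/
def IsMatching (M : V → V) : Prop :=
  Function.Involutive M ∧ ∀ v, M v ≠ v → G.Adj v (M v)

/-- Twice the number of edges of the matching `M`, i.e. the number of matched vertices. -/
def matchSize (M : V → V) : ℕ := (univ.filter fun v => M v ≠ v).card

/-- `M` is a maximum matching of `G`. -/
def IsMaxMatching (M : V → V) : Prop :=
  IsMatching G M ∧ ∀ M' : V → V, IsMatching G M' → matchSize M' ≤ matchSize M

/-- `M` is a matching of the induced subgraph `G[L]`. -/
def IsMatchingOn (L : Finset V) (M : V → V) : Prop :=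
  IsMatching G M ∧ ∀ v, M v ≠ v → v ∈ L

/-- `M` is a maximum matching of the induced subgraph `G[L]`. -/
def IsMaxMatchingOn (L : Finset V) (M : V → V) : Prop :=
  IsMatchingOn G L M ∧ ∀ M' : V → V, IsMatchingOn G L M' → matchSize M' ≤ matchSize M

/-- `S` is a maximum independent set of the induced subgraph `G[L]`. -/
def IsMaxIndepOn (L : Finset V) (S : Finset V) : Prop :=
  S ⊆ L ∧ Indep G S ∧ ∀ T : Finset V, T ⊆ L → Indep G T → T.card ≤ S.card

/-- `core` of the induced subgraph `G[L]`. -/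
def coreOn (L : Finset V) : Set V := {v | ∀ S : Finset V, IsMaxIndepOn G L S → v ∈ S}

/-- `D(G[L])`: vertices of `L` missed by some maximum matching of `G[L]`. -/
def Dset (L : Finset V) : Set V := {v | v ∈ L ∧ ∃ M : V → V, IsMaxMatchingOn G L M ∧ M v = v}

/-- The Larson boundary `∂_L(G)` of the set `L`. -/
def boundaryL (L : Finset V) : Set V := {v | v ∈ L ∧ ∃ w, w ∉ L ∧ G.Adj v w}

/-- The critical difference `d(G)`. -/
noncomputable def critDiff : ℤ := sSup {d : ℤ | ∃ X : Finset V, diffI G X = d}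

/-- The difference of `S` computed in the induced subgraph `G[L]`. -/
def diffOn (L : Finset V) (S : Finset V) : ℤ := (S.card : ℤ) - ((nbhd G S ∩ L).card : ℤ)

/-- The critical difference of the induced subgraph `G[L]`. -/
noncomputable def critDiffOn (L : Finset V) : ℤ := sSup {d : ℤ | ∃ X : Finset V, X ⊆ L ∧ diffOn G L X = d}

/-- `G` is a König–Egerváry graph: `α(G) + μ(G) = |V(G)|`. -/
def KonigEgervary : Prop :=
  ∃ (S : Finset V) (M : V → V), IsMaxIndep G S ∧ IsMaxMatching G M ∧
    2 * S.card + matchSize M = 2 * Fintype.card V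

lemma mem_nbhd' {S : Finset V} {v : V} : v ∈ nbhd G S ↔ ∃ u ∈ S, G.Adj u v := by
  simp [nbhd]

lemma indep_sub {S T : Finset V} (h : T ⊆ S) (hS : Indep G S) : Indep G T :=
  fun u hu v hv => hS u (h hu) v (h hv)

lemma nbhd_disj {S : Finset V} (hS : Indep G S) : ∀ v ∈ S, v ∉ nbhd G S := by
  intro v hv hvn
  obtain ⟨u, hu, hadj⟩ := (mem_nbhd' G).1 hvn
  exact hS u hu v hv hadj

lemma diff_le_of_matching {J : Finset V} {M : V → V} (hJ : Indep G J)
    (hM : IsMatching G M) :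
    diffI G J ≤ (Fintype.card V : ℤ) - matchSize M := by
  classical
  have hcard : (J.filter (fun v => ¬ M v = v)).card ≤ (nbhd G J).card := by
    apply Finset.card_le_card_of_injOn M
    · intro v hv
      rw [mem_coe, mem_filter] at hv
      exact (mem_nbhd' G).2 ⟨v, hv.1, hM.2 v hv.2⟩
    · intro a _ b _ hab
      exact hM.1.injective hab
  have h1 : (J.filter (fun v => M v = v)).card + (J.filter (fun v => ¬ M v = v)).card
      = J.card := Finset.card_filter_add_card_filter_not _
  have h2 : (J.filter (fun v => M v = v)).card ≤ ((univ : Finset V).filter (fun v => M v = v)).card :=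
    Finset.card_le_card (Finset.filter_subset_filter _ (subset_univ J))
  have h3 : ((univ : Finset V).filter (fun v => M v = v)).card
      + ((univ : Finset V).filter (fun v => ¬ M v = v)).card = Fintype.card V := by
    rw [Finset.card_filter_add_card_filter_not, card_univ]
  have h4 : matchSize M = ((univ : Finset V).filter (fun v => ¬ M v = v)).card := rfl
  unfold diffI
  omega

lemma nbhd_max {S : Finset V} (hS : IsMaxIndep G S) : nbhd G S = univ \ S := by
  apply Finset.Subset.antisymm
  · intro v hv
    exact mem_sdiff.2 ⟨mem_univ v, fun hvS => nbhd_disj G hS.1 v hvS hv⟩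
  · intro v hv
    rw [mem_sdiff] at hv
    by_contra hvn
    have hind : Indep G (insert v S) := by
      intro a ha b hb
      rw [mem_insert] at ha hb
      rcases ha with rfl | ha
      · rcases hb with rfl | hb
        · exact G.irrefl
        · exact fun hadj => hvn ((mem_nbhd' G).2 ⟨b, hb, hadj.symm⟩)
      · rcases hb with rfl | hb
        · exact fun hadj => hvn ((mem_nbhd' G).2 ⟨a, ha, hadj⟩)
        · exact hS.1 a ha b hb
    have := hS.2 _ hind
    rw [Finset.card_insert_of_notMem hv.2] at this
    omega

lemma exists_maxIndep : ∃ S, IsMaxIndep G S := by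
  classical
  obtain ⟨S, hS, hmax⟩ := Finset.exists_max_image
    ((univ : Finset (Finset V)).filter (Indep G)) Finset.card
    ⟨∅, mem_filter.2 ⟨mem_univ _, by intro u hu; simp at hu⟩⟩
  exact ⟨S, (mem_filter.1 hS).2, fun T hT => hmax T (mem_filter.2 ⟨mem_univ T, hT⟩)⟩

lemma exists_maxMatching : ∃ M, IsMaxMatching G M := by
  classical
  have hid : IsMatching G id := ⟨fun v => rfl, fun v hv => absurd rfl hv⟩
  obtain ⟨M, hM, hmax⟩ := Finset.exists_max_image
    ((univ : Finset (V → V)).filter (IsMatching G)) matchSize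
    ⟨id, mem_filter.2 ⟨mem_univ _, hid⟩⟩
  exact ⟨M, (mem_filter.1 hM).2, fun M' hM' => hmax M' (mem_filter.2 ⟨mem_univ _, hM'⟩)⟩

lemma matching_of_injective (S : Finset V) (f : {x : V // x ∉ S} → V)
    (hinj : Function.Injective f) (hfS : ∀ x, f x ∈ S) (hadj : ∀ x, G.Adj x.1 (f x)) :
    ∃ M : V → V, IsMatching G M ∧ 2 * (univ \ S).card ≤ matchSize M := by
  classical
  set M : V → V := fun x =>
    if hx : x ∈ S then (if h2 : ∃ v, f v = x then ((h2.choose : {x : V // x ∉ S}) : V) else x)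
    else f ⟨x, hx⟩ with hMdef
  have hM1 : ∀ (x : V) (hx : x ∉ S), M x = f ⟨x, hx⟩ := by
    intro x hx
    simp only [hMdef, dif_neg hx]
  have hM2 : ∀ v : {x : V // x ∉ S}, M (f v) = (v : V) := by
    intro v
    have h2 : ∃ w, f w = f v := ⟨v, rfl⟩
    simp only [hMdef, dif_pos (hfS v), dif_pos h2]
    exact congrArg Subtype.val (hinj h2.choose_spec)
  have hM3 : ∀ x ∈ S, (¬ ∃ v, f v = x) → M x = x := by
    intro x hx h2
    simp only [hMdef, dif_pos hx, dif_neg h2]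
  have hinv : Function.Involutive M := by
    intro x
    by_cases hx : x ∈ S
    · by_cases h2 : ∃ v, f v = x
      · obtain ⟨v, rfl⟩ := h2
        rw [hM2 v, hM1 _ v.2]
      · rw [hM3 x hx h2, hM3 x hx h2]
    · rw [hM1 x hx, hM2 ⟨x, hx⟩]
  have hmatch : IsMatching G M := by
    refine ⟨hinv, fun v hv => ?_⟩
    by_cases hx : v ∈ S
    · by_cases h2 : ∃ w, f w = v
      · obtain ⟨w, rfl⟩ := h2
        rw [hM2 w]
        exact (hadj w).symm
      · exact absurd (hM3 v hx h2) hv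
    · rw [hM1 v hx]
      exact hadj ⟨v, hx⟩
  refine ⟨M, hmatch, ?_⟩
  have hsub : (univ \ S) ∪ (univ : Finset {x : V // x ∉ S}).image f
      ⊆ (univ : Finset V).filter (fun v => ¬ M v = v) := by
    intro x hx
    rw [mem_union] at hx
    rw [mem_filter]
    refine ⟨mem_univ x, ?_⟩
    rcases hx with hx | hx
    · rw [mem_sdiff] at hx
      rw [hM1 x hx.2]
      intro h
      exact hx.2 (h ▸ hfS ⟨x, hx.2⟩)
    · rw [mem_image] at hx
      obtain ⟨v, _, rfl⟩ := hx
      rw [hM2 v]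
      intro h
      exact v.2 (h ▸ hfS v)
  have hdisj : Disjoint (univ \ S) ((univ : Finset {x : V // x ∉ S}).image f) := by
    rw [Finset.disjoint_left]
    intro x hx hx2
    rw [mem_image] at hx2
    obtain ⟨v, _, rfl⟩ := hx2
    exact (mem_sdiff.1 hx).2 (hfS v)
  have himg : ((univ : Finset {x : V // x ∉ S}).image f).card = (univ \ S).card := by
    rw [Finset.card_image_of_injective _ hinj, card_univ, Fintype.card_subtype]
    congr 1
    ext x
    simp
  have hcard := Finset.card_union_of_disjoint hdisj
  have hle := Finset.card_le_card hsub
  have h4 : matchSize M = ((univ : Finset V).filter (fun v => ¬ M v = v)).card := rfl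
  omega


theorem stmt4 : KonigEgervary G ↔ ∀ S : Finset V, IsMaxIndep G S → IsCritIndep G S := by
  classical
  have hcardsplit : ∀ S : Finset V, S.card + (univ \ S).card = Fintype.card V := by
    intro S
    rw [add_comm, Finset.card_sdiff_add_card_eq_card (subset_univ S), card_univ]
  constructor
  · rintro ⟨S₀, M, hS₀, hM, heq⟩ S hS
    refine ⟨hS.1, fun J hJ => ?_⟩
    have hcard : S.card = S₀.card := le_antisymm (hS₀.2 S hS.1) (hS.2 S₀ hS₀.1)
    have h1 := diff_le_of_matching G hJ hM.1
    have h2 : (nbhd G S).card ≤ (univ \ S).card := by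
      apply card_le_card
      intro v hv
      exact mem_sdiff.2 ⟨mem_univ v, fun hvS => nbhd_disj G hS.1 v hvS hv⟩
    have h3 := hcardsplit S
    unfold diffI at *
    omega
  · intro hcrit
    obtain ⟨S, hS⟩ := exists_maxIndep G
    obtain ⟨M, hM⟩ := exists_maxMatching G
    refine ⟨S, M, hS, hM, ?_⟩
    have hSc : IsCritIndep G S := hcrit S hS
    have hnS : (nbhd G S).card = (univ \ S).card := by rw [nbhd_max G hS]
    have hall : ∀ s : Finset {x : V // x ∉ S},
        s.card ≤ (s.biUnion (fun v => G.neighborFinset v.1 ∩ S)).card := by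
      intro s
      by_contra hlt
      push_neg at hlt
      set T : Finset V := s.image Subtype.val with hT
      set A : Finset V := s.biUnion (fun v => G.neighborFinset v.1 ∩ S) with hA
      have hTcard : T.card = s.card := card_image_of_injective s Subtype.val_injective
      have hAS : A ⊆ S := by
        intro a ha
        rw [hA, mem_biUnion] at ha
        obtain ⟨v, _, hv⟩ := ha
        exact (mem_inter.1 hv).2
      have hTS : T ⊆ univ \ S := by
        intro x hx
        rw [hT, mem_image] at hx
        obtain ⟨v, _, rfl⟩ := hx
        exact mem_sdiff.2 ⟨mem_univ _, v.2⟩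
      have hIind : Indep G (S \ A) := indep_sub G sdiff_subset hS.1
      have hnI : nbhd G (S \ A) ⊆ (univ \ S) \ T := by
        intro w hw
        obtain ⟨u, hu, hadj⟩ := (mem_nbhd' G).1 hw
        rw [mem_sdiff] at hu
        have hwS : w ∉ S := fun hwS => hS.1 u hu.1 w hwS hadj
        have hwT : w ∉ T := by
          intro hwT
          rw [hT, mem_image] at hwT
          obtain ⟨v, hvs, rfl⟩ := hwT
          apply hu.2
          rw [hA, mem_biUnion]
          exact ⟨v, hvs, mem_inter.2 ⟨(G.mem_neighborFinset _ _).2 hadj.symm, hu.1⟩⟩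
        exact mem_sdiff.2 ⟨mem_sdiff.2 ⟨mem_univ w, hwS⟩, hwT⟩
      have hd := hSc.2 (S \ A) hIind
      have hc1 : (S \ A).card = S.card - A.card := card_sdiff_of_subset hAS
      have hc2 : (nbhd G (S \ A)).card ≤ ((univ \ S) \ T).card := card_le_card hnI
      have hc3 : ((univ \ S) \ T).card = (univ \ S).card - T.card := card_sdiff_of_subset hTS
      have hc4 : A.card ≤ S.card := card_le_card hAS
      have hc5 : T.card ≤ (univ \ S).card := card_le_card hTS
      unfold diffI at hd
      omega
    obtain ⟨f, hfinj, hf⟩ :=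
      (Finset.all_card_le_biUnion_card_iff_exists_injective
        (fun v : {x : V // x ∉ S} => G.neighborFinset v.1 ∩ S)).1 hall
    obtain ⟨M₀, hM₀, hM₀size⟩ := matching_of_injective G S f hfinj
      (fun x => (mem_inter.1 (hf x)).2)
      (fun x => (G.mem_neighborFinset _ _).1 (mem_inter.1 (hf x)).1)
    have hle1 : matchSize M₀ ≤ matchSize M := hM.2 M₀ hM₀
    have hle2 := diff_le_of_matching G hS.1 hM.1
    have h3 := hcardsplit S
    unfold diffI at hle2
    omega
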